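/- For every k₁ > 0 there exist constants C > 0 and K > 2k₁ such that for every j ∈ {−1, 1}, every k ∈ ℝ with |k| ≥ K, and every p ∈ ℝ with 0 < |p| ≤ k₁, setting m = k − p, the quantity ω(p) + j(ω(k) − ω(m)) is nonzero, the quantity ω(p) + j·p is nonzero, and | j·ρ(k)/(ω(p) + j(ω(k) − ω(m))) − j·k/(ω(p) + j·p) | ≤ C/|k|. -/

import Mathlib

set_option maxHeartbeats 800000

noncomputable def omega (k : ℝ) : ℝ := Real.sign k * Real.sqrt (1 + k ^ 2)

noncomputable def rho (k : ℝ) : ℝ := Real.sign k * (k ^ 2 / Real.sqrt (1 + k ^ 2))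

lemma omega_neg (x : ℝ) : omega (-x) = - omega x := by
  unfold omega
  rw [Real.sign_neg, show (-x) ^ 2 = x ^ 2 by ring]
  ring

lemma rho_neg (x : ℝ) : rho (-x) = - rho x := by
  unfold rho
  rw [Real.sign_neg, show (-x) ^ 2 = x ^ 2 by ring]
  ring

lemma aux_lt_sqrt (x S : ℝ) (h2 : S ^ 2 = 1 + x ^ 2) (hS : 0 < S) : x < S := by nlinarith

lemma aux_sqrt_le (x c S : ℝ) (h2 : S ^ 2 = 1 + x ^ 2) (hS : 0 < S) (hx : 0 ≤ x)
    (hxc : x ≤ c) : S ≤ 1 + c := by nlinarith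

lemma aux_abs_le (a b c p : ℝ) (h : a * b = c * p) (hc : 0 < c) (hcb : c ≤ b) :
    |a| ≤ |p| := by
  have hb : 0 < b := lt_of_lt_of_le hc hcb
  rw [abs_le]
  constructor <;> nlinarith [le_abs_self p, neg_abs_le p, abs_nonneg p]

lemma aux_term1 (k Sk : ℝ) (hk0 : 0 < k) (hSkk : k < Sk) :
    k * (2 * k) ≤ 1 * (Sk * (Sk + k)) := by nlinarith

lemma aux_one_lt (x S : ℝ) (h2 : S ^ 2 = 1 + x ^ 2) (hS : 0 < S) (hx : 0 < x) :
    1 < S := by nlinarith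

lemma aux_sum_le (k m Sk Sm : ℝ) (hk0 : 0 < k) (hm0 : 0 < m) (hSk1 : 1 < Sk)
    (hSm1 : 1 < Sm) : k + m ≤ k * Sm + m * Sk := by nlinarith

lemma aux_T (k k₁ Sk Sm a p : ℝ) (hk0 : 0 < k) (hkSk : k < Sk) (hSm0 : 0 < Sm)
    (hap : |a| ≤ |p|) (hpk : |p| ≤ k₁) (hp : 0 ≤ |p|) :
    k * |p| * |a| * k ≤ k₁ ^ 2 * (Sk * (Sk + Sm)) := by
  have e : k * |p| * |a| * k = (k * k * |p|) * |a| := by ring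
  have h1 : (k * k * |p|) * |a| ≤ (k * k * |p|) * |p| :=
    mul_le_mul_of_nonneg_left hap (mul_nonneg (mul_self_nonneg k) (abs_nonneg p))
  have h2 : (k * k * |p|) * |p| = (k * k) * (|p| * |p|) := by ring
  have h3 : |p| * |p| ≤ k₁ * k₁ := mul_le_mul hpk hpk hp (le_trans hp hpk)
  have h4 : (k * k) * (|p| * |p|) ≤ (k * k) * (k₁ * k₁) :=
    mul_le_mul_of_nonneg_left h3 (mul_self_nonneg k)
  have h5 : k * k ≤ Sk * (Sk + Sm) :=
    mul_le_mul hkSk.le (by linarith) hk0.le (by linarith)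
  have h6 : (k * k) * (k₁ * k₁) = (k₁ * k₁) * (k * k) := by ring
  have h7 : (k₁ * k₁) * (k * k) ≤ (k₁ * k₁) * (Sk * (Sk + Sm)) :=
    mul_le_mul_of_nonneg_left h5 (mul_self_nonneg k₁)
  nlinarith [h1, h4, h7]

lemma key_kernel (k₁ : ℝ) (hk₁ : 0 < k₁) (j : ℝ) (hj : j = 1 ∨ j = -1) (k p : ℝ)
    (hk : 2 * k₁ + 1 ≤ k) (hp0 : 0 < |p|) (hpk : |p| ≤ k₁) :
    omega p + j * (omega k - omega (k - p)) ≠ 0 ∧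
    omega p + j * p ≠ 0 ∧
    |j * rho k / (omega p + j * (omega k - omega (k - p))) - j * k / (omega p + j * p)|
      ≤ (((1 + k₁) / 2 + 2 * k₁ ^ 2) * (1 + 2 * k₁) ^ 2) / |k| := by
  have hpabs := abs_le.mp hpk
  have hple := le_abs_self p
  have hnple := neg_abs_le p
  have hk0 : 0 < k := by linarith
  have hm0 : 0 < k - p := by linarith
  have hm2 : k / 2 < k - p := by linarith
  set m := k - p with hm
  set Sk := Real.sqrt (1 + k ^ 2) with hSkdef
  set Sm := Real.sqrt (1 + m ^ 2) with hSmdef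
  set Sp := Real.sqrt (1 + p ^ 2) with hSpdef
  have hSk2 : Sk ^ 2 = 1 + k ^ 2 := Real.sq_sqrt (by positivity)
  have hSm2 : Sm ^ 2 = 1 + m ^ 2 := Real.sq_sqrt (by positivity)
  have hSp2 : Sp ^ 2 = 1 + p ^ 2 := Real.sq_sqrt (by positivity)
  have hSkpos : 0 < Sk := Real.sqrt_pos.mpr (by positivity)
  have hSmpos : 0 < Sm := Real.sqrt_pos.mpr (by positivity)
  have hSppos : 0 < Sp := Real.sqrt_pos.mpr (by positivity)
  have hSkk : k < Sk := aux_lt_sqrt k Sk hSk2 hSkpos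
  have hSmm : m < Sm := aux_lt_sqrt m Sm hSm2 hSmpos
  have hSpp : |p| < Sp := aux_lt_sqrt |p| Sp (by rw [hSp2, sq_abs]) hSppos
  have hSple : Sp ≤ 1 + k₁ :=
    aux_sqrt_le |p| k₁ Sp (by rw [hSp2, sq_abs]) hSppos (abs_nonneg p) hpk
  have hok : omega k = Sk := by rw [omega, Real.sign_of_pos hk0, one_mul]
  have hom : omega m = Sm := by rw [omega, Real.sign_of_pos hm0, one_mul]
  have hrk : rho k = k ^ 2 / Sk := by rw [rho, Real.sign_of_pos hk0, one_mul]
  have hwabs : |omega p| = Sp := by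
    rw [omega, abs_mul, abs_of_pos hSppos]
    rcases lt_trichotomy p 0 with h | h | h
    · rw [Real.sign_of_neg h]; norm_num
    · exact absurd h (by intro h; rw [h] at hp0; simp at hp0)
    · rw [Real.sign_of_pos h]; norm_num
  have hjabs : |j| = 1 := by rcases hj with rfl | rfl <;> norm_num
  set w := omega p with hw
  set D₁ := w + j * (Sk - Sm) with hD₁
  set D₂ := w + j * p with hD₂
  have hδpos : (0:ℝ) < 1 / (1 + 2 * k₁) := by positivity
  have hδ : 1 / (1 + 2 * k₁) ≤ Sp - |p| := by
    have h1 : (Sp - |p|) * (Sp + |p|) = 1 := by linear_combination hSp2 - sq_abs p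
    have h2 : Sp + |p| ≤ 1 + 2 * k₁ := by linarith
    rw [div_le_iff₀ (by linarith)]
    calc (1:ℝ) = (Sp - |p|) * (Sp + |p|) := h1.symm
      _ ≤ (Sp - |p|) * (1 + 2 * k₁) := mul_le_mul_of_nonneg_left h2 (by linarith)
  have hSkSm : (Sk - Sm) * (Sk + Sm) = (k + m) * p := by
    linear_combination hSk2 - hSm2 - (k + m) * hm
  have habsSkSm : |Sk - Sm| ≤ |p| :=
    aux_abs_le _ _ (k + m) _ hSkSm (by linarith) (by linarith)
  have hD2abs : 1 / (1 + 2 * k₁) ≤ |D₂| := by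
    have h1 : |w| - |j * p| ≤ |w + j * p| := by
      have h := abs_sub_abs_le_abs_sub w (-(j * p))
      rw [abs_neg, sub_neg_eq_add] at h
      exact h
    rw [abs_mul, hjabs, one_mul, hwabs] at h1
    linarith
  have hD1abs : 1 / (1 + 2 * k₁) ≤ |D₁| := by
    have h1 : |w| - |j * (Sk - Sm)| ≤ |w + j * (Sk - Sm)| := by
      have h := abs_sub_abs_le_abs_sub w (-(j * (Sk - Sm)))
      rw [abs_neg, sub_neg_eq_add] at h
      exact h
    rw [abs_mul, hjabs, one_mul, hwabs] at h1
    linarith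
  have hD1ne : D₁ ≠ 0 := by
    intro h; rw [h, abs_zero] at hD1abs; linarith
  have hD2ne : D₂ ≠ 0 := by
    intro h; rw [h, abs_zero] at hD2abs; linarith
  refine ⟨by rw [hok, hom]; exact hD1ne, hD2ne, ?_⟩
  rw [hok, hom, hrk]
  have hsplit : j * (k ^ 2 / Sk) / D₁ - j * k / D₂
      = j * ((k ^ 2 / Sk) * D₂ - k * D₁) / (D₁ * D₂) := by
    field_simp
  rw [hsplit, abs_div, abs_mul, hjabs, one_mul, abs_mul]
  set N := (k ^ 2 / Sk) * D₂ - k * D₁ with hN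
  set T := (k ^ 2 / Sk) * p - k * (Sk - Sm) with hT
  have hNsplit : N = w * (k ^ 2 / Sk - k) + j * T := by
    rw [hN, hT, hD₁, hD₂]; ring
  have hterm1 : |k ^ 2 / Sk - k| ≤ 1 / (2 * k) := by
    have hid : k ^ 2 / Sk - k = -k / (Sk * (Sk + k)) := by
      have h1 : Sk ≠ 0 := ne_of_gt hSkpos
      have h2 : Sk + k ≠ 0 := by positivity
      field_simp
      linear_combination (-1 : ℝ) * hSk2
    rw [hid, abs_div, abs_of_pos (by positivity : (0:ℝ) < Sk * (Sk + k)), abs_neg,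
      abs_of_pos hk0, div_le_div_iff₀ (by positivity) (by positivity)]
    exact aux_term1 k Sk hk0 hSkk
  have hkSm : (k * Sm - m * Sk) * (k * Sm + m * Sk) = (k + m) * p := by
    linear_combination k ^ 2 * hSm2 - m ^ 2 * hSk2 - (k + m) * hm
  have habskSm : |k * Sm - m * Sk| ≤ |p| := by
    refine aux_abs_le _ _ (k + m) _ hkSm (by linarith) ?_
    have h1 : 1 < Sm := aux_one_lt m Sm hSm2 hSmpos hm0
    have h2 : 1 < Sk := aux_one_lt k Sk hSk2 hSkpos hk0
    exact aux_sum_le k m Sk Sm hk0 hm0 h2 h1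
  have hTeq : T = k * p * (k * Sm - m * Sk) / (Sk * (Sk + Sm)) := by
    rw [hT]
    have h1 : Sk ≠ 0 := ne_of_gt hSkpos
    have h2 : Sk + Sm ≠ 0 := by positivity
    field_simp
    linear_combination Sk * hSm2 - Sk * hSk2 + Sk * (m + k - p) * hm
  have hTabs : |T| ≤ k₁ ^ 2 / k := by
    rw [hTeq, abs_div, abs_mul, abs_mul, abs_of_pos hk0,
      abs_of_pos (by positivity : (0:ℝ) < Sk * (Sk + Sm))]
    rw [div_le_div_iff₀ (by positivity) hk0]
    exact aux_T k k₁ Sk Sm _ p hk0 hSkk hSmpos habskSm hpk (abs_nonneg p)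
  have hNabs : |N| ≤ ((1 + k₁) / 2 + 2 * k₁ ^ 2) / k := by
    rw [hNsplit]
    have h1 : |w * (k ^ 2 / Sk - k) + j * T| ≤ |w| * |k ^ 2 / Sk - k| + |j| * |T| := by
      calc |w * (k ^ 2 / Sk - k) + j * T| ≤ |w * (k ^ 2 / Sk - k)| + |j * T| := abs_add_le _ _
        _ = |w| * |k ^ 2 / Sk - k| + |j| * |T| := by rw [abs_mul, abs_mul]
    rw [hjabs, one_mul, hwabs] at h1
    have h2 : Sp * |k ^ 2 / Sk - k| ≤ (1 + k₁) * (1 / (2 * k)) :=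
      mul_le_mul hSple hterm1 (abs_nonneg _) (by positivity)
    have h3 : (1 + k₁) * (1 / (2 * k)) + k₁ ^ 2 / k = ((1 + k₁) / 2 + k₁ ^ 2) / k := by
      field_simp
    have h4 : ((1 + k₁) / 2 + k₁ ^ 2) / k ≤ ((1 + k₁) / 2 + 2 * k₁ ^ 2) / k := by
      gcongr
      linarith [sq_nonneg k₁]
    linarith
  have hfinal : |N| / (|D₁| * |D₂|)
      ≤ (((1 + k₁) / 2 + 2 * k₁ ^ 2) / k) / ((1 / (1 + 2 * k₁)) * (1 / (1 + 2 * k₁))) := by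
    apply div_le_div₀ (by positivity) hNabs (by positivity)
    exact mul_le_mul hD1abs hD2abs (le_of_lt hδpos) (abs_nonneg _)
  calc |N| / (|D₁| * |D₂|)
      ≤ (((1 + k₁) / 2 + 2 * k₁ ^ 2) / k) / ((1 / (1 + 2 * k₁)) * (1 / (1 + 2 * k₁))) := hfinal
    _ = (((1 + k₁) / 2 + 2 * k₁ ^ 2) * (1 + 2 * k₁) ^ 2) / k := by
        have h1 : (1 + 2 * k₁) ≠ 0 := by positivity
        have h2 : k ≠ 0 := ne_of_gt hk0
        rw [div_eq_div_iff (by positivity) h2]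
        field_simp
    _ = (((1 + k₁) / 2 + 2 * k₁ ^ 2) * (1 + 2 * k₁) ^ 2) / |k| := by
        rw [abs_of_pos hk0]

theorem kernel_jj_asymptotics (k₁ : ℝ) (hk₁ : 0 < k₁) :
    ∃ C > (0 : ℝ), ∃ K : ℝ, 2 * k₁ < K ∧
      ∀ j : ℝ, (j = 1 ∨ j = -1) → ∀ k p : ℝ, K ≤ |k| → 0 < |p| → |p| ≤ k₁ →
        omega p + j * (omega k - omega (k - p)) ≠ 0 ∧
        omega p + j * p ≠ 0 ∧
        |j * rho k / (omega p + j * (omega k - omega (k - p))) -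
            j * k / (omega p + j * p)| ≤ C / |k| := by
  refine ⟨((1 + k₁) / 2 + 2 * k₁ ^ 2) * (1 + 2 * k₁) ^ 2, by positivity, 2 * k₁ + 1,
    by linarith, ?_⟩
  intro j hj k p hK hp0 hpk
  rcases le_or_gt 0 k with hk | hk
  · have : 2 * k₁ + 1 ≤ k := by rwa [abs_of_nonneg hk] at hK
    exact key_kernel k₁ hk₁ j hj k p this hp0 hpk
  · have hK' : 2 * k₁ + 1 ≤ -k := by rwa [abs_of_neg hk] at hK
    have hp0' : 0 < |-p| := by rwa [abs_neg]
    have hpk' : |-p| ≤ k₁ := by rwa [abs_neg]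
    obtain ⟨h1, h2, h3⟩ := key_kernel k₁ hk₁ j hj (-k) (-p) hK' hp0' hpk'
    have e1 : omega (-p) + j * (omega (-k) - omega (-k - -p))
        = -(omega p + j * (omega k - omega (k - p))) := by
      rw [show -k - -p = -(k - p) by ring, omega_neg, omega_neg, omega_neg]; ring
    have e2 : omega (-p) + j * -p = -(omega p + j * p) := by
      rw [omega_neg]; ring
    rw [e1, e2, rho_neg] at h3
    rw [e1] at h1
    rw [e2] at h2
    refine ⟨neg_ne_zero.mp h1, neg_ne_zero.mp h2, ?_⟩
    have e3 : j * -rho k / -(omega p + j * (omega k - omega (k - p))) -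
        j * -k / -(omega p + j * p)
        = j * rho k / (omega p + j * (omega k - omega (k - p))) - j * k / (omega p + j * p) := by
      rw [mul_neg, mul_neg, neg_div_neg_eq, neg_div_neg_eq]
    rw [e3, abs_neg] at h3
    exact h3
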